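/- arXiv:2307.08768 — 9 statements merged into one kernel-verified Lean document; each statement's English description precedes it below -/
import Mathlib

section
/- For the two-outcome constant product cost function C(x;Π) = [−Π₁−Π₂+x₁+x₂ + √(((Π₁−x₁)−(Π₂−x₂))² + 4Π₁Π₂)]/2 with Π₁,Π₂ > 0, one has min(x₁,x₂) ≤ C(x;Π) ≤ max(x₁,x₂) for every x ∈ ℝ², with equality at either endpoint if and only if x₁ = x₂. -/
/-- Two-outcome constant product cost function. -/
noncomputable def cpCost (P1 P2 x1 x2 : ℝ) : ℝ :=
  (-P1 - P2 + x1 + x2 + Real.sqrt (((P1 - x1) - (P2 - x2))^2 + 4 * P1 * P2)) / 2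

theorem stmt_1 (P1 P2 x1 x2 : ℝ) (hP1 : 0 < P1) (hP2 : 0 < P2) :
    min x1 x2 ≤ cpCost P1 P2 x1 x2 ∧ cpCost P1 P2 x1 x2 ≤ max x1 x2 ∧
    ((cpCost P1 P2 x1 x2 = min x1 x2 ∨ cpCost P1 P2 x1 x2 = max x1 x2) ↔ x1 = x2) := by
  set t : ℝ := |x1 - x2| with ht
  have ht0 : 0 ≤ t := abs_nonneg _
  have hts : t ^ 2 = (x1 - x2) ^ 2 := sq_abs _
  have habs : |P1 - P2| < P1 + P2 := by
    rw [abs_lt]; constructor <;> linarith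
  have hu : |(P1 - P2) * (x1 - x2)| ≤ (P1 + P2) * t := by
    rw [abs_mul]
    exact mul_le_mul_of_nonneg_right habs.le (abs_nonneg _)
  obtain ⟨hu1, hu2⟩ := abs_le.mp hu
  set D : ℝ := ((P1 - x1) - (P2 - x2))^2 + 4 * P1 * P2 with hD
  have hD0 : 0 ≤ D := by positivity
  have hD1 : D ≤ (P1 + P2 + t) ^ 2 := by nlinarith [hts, hu1, hu2]
  have hD2 : (P1 + P2 - t) ^ 2 ≤ D := by nlinarith [hts, hu1, hu2]
  have hS0 : 0 ≤ Real.sqrt D := Real.sqrt_nonneg _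
  have hSub : Real.sqrt D ≤ P1 + P2 + t := by
    calc Real.sqrt D ≤ Real.sqrt ((P1 + P2 + t) ^ 2) := Real.sqrt_le_sqrt hD1
    _ = P1 + P2 + t := Real.sqrt_sq (by linarith)
  have hSlb : P1 + P2 - t ≤ Real.sqrt D := by
    calc P1 + P2 - t ≤ |P1 + P2 - t| := le_abs_self _
    _ = Real.sqrt ((P1 + P2 - t) ^ 2) := (Real.sqrt_sq_eq_abs _).symm
    _ ≤ Real.sqrt D := Real.sqrt_le_sqrt hD2
  have hmm : min x1 x2 + max x1 x2 = x1 + x2 := min_add_max _ _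
  have hMm : max x1 x2 - min x1 x2 = t := by rw [max_sub_min_eq_abs, abs_sub_comm]
  have hC : cpCost P1 P2 x1 x2 = (-P1 - P2 + x1 + x2 + Real.sqrt D) / 2 := rfl
  refine ⟨by rw [hC]; linarith, by rw [hC]; linarith, ?_, ?_⟩
  · intro h
    by_contra hne
    have htpos : 0 < t := abs_pos.mpr (sub_ne_zero.mpr hne)
    have hust : |(P1 - P2) * (x1 - x2)| < (P1 + P2) * t := by
      rw [abs_mul]
      exact mul_lt_mul_of_pos_right habs htpos
    obtain ⟨hv1, hv2⟩ := abs_lt.mp hust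
    rcases h with h | h
    · have hS : Real.sqrt D = P1 + P2 - t := by rw [hC] at h; linarith
      have hDe : D = (P1 + P2 - t) ^ 2 := by
        rw [← hS, Real.sq_sqrt hD0]
      nlinarith [hts, hv2]
    · have hS : Real.sqrt D = P1 + P2 + t := by rw [hC] at h; linarith
      have hDe : D = (P1 + P2 + t) ^ 2 := by
        rw [← hS, Real.sq_sqrt hD0]
      nlinarith [hts, hv1]
  · intro h
    subst h
    left
    have : D = (P1 + P2) ^ 2 := by rw [hD]; ring
    rw [hC, this, Real.sqrt_sq (by linarith)]
    simp; ring
end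

section
/- The two-outcome constant product cost function x ↦ C(x;Π) = [−Π₁−Π₂+x₁+x₂ + √(((Π₁−x₁)−(Π₂−x₂))² + 4Π₁Π₂)]/2 is convex on ℝ² and strictly increasing in each coordinate, for any fixed Π₁, Π₂ > 0. -/
private lemma sqrt_conv (c : ℝ) (hc : 0 ≤ c) (u v a b : ℝ) (ha : 0 ≤ a) (hb : 0 ≤ b)
    (hab : a + b = 1) :
    Real.sqrt ((a * u + b * v) ^ 2 + c) ≤ a * Real.sqrt (u ^ 2 + c) + b * Real.sqrt (v ^ 2 + c) := by
  set A := Real.sqrt (u ^ 2 + c) with hA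
  set B := Real.sqrt (v ^ 2 + c) with hB
  have hA0 : 0 ≤ A := Real.sqrt_nonneg _
  have hB0 : 0 ≤ B := Real.sqrt_nonneg _
  have hA2 : A ^ 2 = u ^ 2 + c := Real.sq_sqrt (by positivity)
  have hB2 : B ^ 2 = v ^ 2 + c := Real.sq_sqrt (by positivity)
  have hkey : u * v + c ≤ A * B := by
    have h1 : (u * v + c) ^ 2 ≤ (u ^ 2 + c) * (v ^ 2 + c) := by nlinarith [sq_nonneg (u - v)]
    have h2 : u * v + c ≤ |u * v + c| := le_abs_self _
    have h3 : |u * v + c| = Real.sqrt ((u * v + c) ^ 2) := (Real.sqrt_sq_eq_abs _).symm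
    have h4 : Real.sqrt ((u * v + c) ^ 2) ≤ Real.sqrt ((u ^ 2 + c) * (v ^ 2 + c)) :=
      Real.sqrt_le_sqrt h1
    have h5 : Real.sqrt ((u ^ 2 + c) * (v ^ 2 + c)) = A * B := Real.sqrt_mul (by positivity) _
    linarith [h2, h3 ▸ h4, h5 ▸ h4]
  have hRHS : 0 ≤ a * A + b * B := by positivity
  rw [show (a * u + b * v) ^ 2 + c = (a * u + b * v) ^ 2 + c from rfl]
  have hmul : (a * b) * (u * v + c) ≤ (a * b) * (A * B) :=
    mul_le_mul_of_nonneg_left hkey (mul_nonneg ha hb)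
  have e1 : a ^ 2 * A ^ 2 = a ^ 2 * (u ^ 2 + c) := by rw [hA2]
  have e2 : b ^ 2 * B ^ 2 = b ^ 2 * (v ^ 2 + c) := by rw [hB2]
  have hcc : c * (a + b) ^ 2 = c := by rw [hab]; ring
  have hsq : (a * u + b * v) ^ 2 + c ≤ (a * A + b * B) ^ 2 := by nlinarith [hmul, e1, e2, hcc]
  apply (Real.sqrt_le_sqrt hsq).trans
  rw [Real.sqrt_sq hRHS]

private lemma sqrt_strict_lip (c : ℝ) (hc : 0 < c) (u v : ℝ) (huv : u ≠ v) :
    Real.sqrt (u ^ 2 + c) < Real.sqrt (v ^ 2 + c) + |u - v| := by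
  set S := Real.sqrt (v ^ 2 + c) with hS
  have hS0 : 0 ≤ S := Real.sqrt_nonneg _
  have hS2 : S ^ 2 = v ^ 2 + c := Real.sq_sqrt (by positivity)
  have habs : |v| < S := by
    rw [← Real.sqrt_sq_eq_abs]
    exact Real.sqrt_lt_sqrt (sq_nonneg _) (by linarith)
  have hd : 0 < |u - v| := abs_pos.mpr (sub_ne_zero.mpr huv)
  have hpos : 0 < S + |u - v| := by linarith
  rw [show Real.sqrt (u ^ 2 + c) = Real.sqrt (u ^ 2 + c) from rfl]
  refine (Real.sqrt_lt' hpos).mpr ?_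
  have h2 : v * (u - v) ≤ |v| * |u - v| := by
    rw [← abs_mul]; exact le_abs_self _
  have h3 : |v| * |u - v| < S * |u - v| := mul_lt_mul_of_pos_right habs hd
  have h4 : |u - v| ^ 2 = (u - v) ^ 2 := sq_abs _
  nlinarith [h2, h3, h4, hS2]

theorem stmt_2 (P1 P2 : ℝ) (hP1 : 0 < P1) (hP2 : 0 < P2) :
    ConvexOn ℝ Set.univ (fun x : ℝ × ℝ => cpCost P1 P2 x.1 x.2) ∧
    (∀ x2 : ℝ, StrictMono (fun x1 : ℝ => cpCost P1 P2 x1 x2)) ∧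
    (∀ x1 : ℝ, StrictMono (fun x2 : ℝ => cpCost P1 P2 x1 x2)) := by
  have hc : (0:ℝ) < 4 * P1 * P2 := by positivity
  refine ⟨⟨convex_univ, ?_⟩, ?_, ?_⟩
  · rintro x - y - a b ha hb hab
    simp only [cpCost, smul_eq_mul, Prod.smul_fst, Prod.smul_snd, Prod.fst_add, Prod.snd_add]
    have key := sqrt_conv (4 * P1 * P2) (le_of_lt hc)
      ((P1 - x.1) - (P2 - x.2)) ((P1 - y.1) - (P2 - y.2)) a b ha hb hab
    have harg : (P1 - (a * x.1 + b * y.1)) - (P2 - (a * x.2 + b * y.2))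
        = a * ((P1 - x.1) - (P2 - x.2)) + b * ((P1 - y.1) - (P2 - y.2)) := by ring_nf; nlinarith [hab]
    rw [harg]
    have hx2 : (a • x + b • y).1 = a * x.1 + b * y.1 := rfl
    nlinarith [key, hab]
  · intro x2 s s' hss'
    simp only [cpCost]
    have key := sqrt_strict_lip (4 * P1 * P2) hc
      ((P1 - s) - (P2 - x2)) ((P1 - s') - (P2 - x2)) (by intro h; nlinarith [hss'])
    rw [show ((P1 - s) - (P2 - x2)) - ((P1 - s') - (P2 - x2)) = s' - s by ring,
      abs_of_pos (by linarith)] at key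
    linarith
  · intro x1 s s' hss'
    simp only [cpCost]
    have key := sqrt_strict_lip (4 * P1 * P2) hc
      ((P1 - x1) - (P2 - s)) ((P1 - x1) - (P2 - s')) (by intro h; nlinarith [hss'])
    rw [show ((P1 - x1) - (P2 - s)) - ((P1 - x1) - (P2 - s')) = s - s' by ring,
      abs_of_neg (by linarith : s - s' < 0), neg_sub] at key
    linarith
end

section
/- The two-outcome constant product cost function is path independent: for all x, y ∈ ℝ², C(x+y;Π) = C(x;Π) + C(y;Π'), where Π' = (Π₁ − x₁ + C(x;Π), Π₂ − x₂ + C(x;Π)) is the post-trade liquidity after bet x. -/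
theorem stmt_4 (P1 P2 x1 x2 y1 y2 : ℝ) (hP1 : 0 < P1) (hP2 : 0 < P2) :
    cpCost P1 P2 (x1 + y1) (x2 + y2) =
      cpCost P1 P2 x1 x2 +
        cpCost (P1 - x1 + cpCost P1 P2 x1 x2) (P2 - x2 + cpCost P1 P2 x1 x2) y1 y2 := by
  set c := cpCost P1 P2 x1 x2 with hc
  have hnn : (0:ℝ) ≤ ((P1 - x1) - (P2 - x2))^2 + 4 * P1 * P2 := by positivity
  have hsq : Real.sqrt (((P1 - x1) - (P2 - x2))^2 + 4 * P1 * P2) ^ 2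
      = ((P1 - x1) - (P2 - x2))^2 + 4 * P1 * P2 := Real.sq_sqrt hnn
  have hprod : (P1 - x1 + c) * (P2 - x2 + c) = P1 * P2 := by
    rw [hc]; unfold cpCost; nlinarith [hsq]
  have harg : ((P1 - x1 + c - y1) - (P2 - x2 + c - y2))^2
        + 4 * (P1 - x1 + c) * (P2 - x2 + c)
      = ((P1 - (x1 + y1)) - (P2 - (x2 + y2)))^2 + 4 * P1 * P2 := by
    rw [mul_assoc, hprod]; ring
  unfold cpCost
  rw [harg]
  rw [hc]; unfold cpCost; ring
end

section
/- The two-outcome constant product cost function preserves the utility level: for every x ∈ ℝ², the post-trade reserves Πᵢ − xᵢ + C(x;Π) are strictly positive and their product equals Π₁Π₂; in particular, buying and immediately selling any bet yields no round-trip profit: C(x;Π) + C(−x;Π') = 0 where Π' is the post-trade liquidity. -/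
theorem stmt_5 (P1 P2 x1 x2 : ℝ) (hP1 : 0 < P1) (hP2 : 0 < P2) :
    0 < P1 - x1 + cpCost P1 P2 x1 x2 ∧ 0 < P2 - x2 + cpCost P1 P2 x1 x2 ∧
    (P1 - x1 + cpCost P1 P2 x1 x2) * (P2 - x2 + cpCost P1 P2 x1 x2) = P1 * P2 ∧
    cpCost P1 P2 x1 x2 +
      cpCost (P1 - x1 + cpCost P1 P2 x1 x2) (P2 - x2 + cpCost P1 P2 x1 x2) (-x1) (-x2) = 0 := by
  set s := Real.sqrt (((P1 - x1) - (P2 - x2))^2 + 4 * P1 * P2) with hs_def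
  have hDnn : (0:ℝ) ≤ ((P1 - x1) - (P2 - x2))^2 + 4 * P1 * P2 := by positivity
  have hs2 : s^2 = ((P1 - x1) - (P2 - x2))^2 + 4 * P1 * P2 := Real.sq_sqrt hDnn
  have hsnn : 0 ≤ s := Real.sqrt_nonneg _
  have h1 : 0 < P1 - x1 + cpCost P1 P2 x1 x2 := by
    rw [cpCost, ← hs_def]; nlinarith [sq_nonneg (s - ((P1 - x1) - (P2 - x2))), sq_nonneg (s + ((P1 - x1) - (P2 - x2)))]
  have h2 : 0 < P2 - x2 + cpCost P1 P2 x1 x2 := by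
    rw [cpCost, ← hs_def]; nlinarith [sq_nonneg (s - ((P1 - x1) - (P2 - x2))), sq_nonneg (s + ((P1 - x1) - (P2 - x2)))]
  have h3 : (P1 - x1 + cpCost P1 P2 x1 x2) * (P2 - x2 + cpCost P1 P2 x1 x2) = P1 * P2 := by
    rw [cpCost, ← hs_def]; nlinarith [hs2]
  refine ⟨h1, h2, h3, ?_⟩
  have harg : ((P1 - x1 + cpCost P1 P2 x1 x2 - -x1) - (P2 - x2 + cpCost P1 P2 x1 x2 - -x2))^2
      + 4 * (P1 - x1 + cpCost P1 P2 x1 x2) * (P2 - x2 + cpCost P1 P2 x1 x2) = (P1 + P2)^2 := by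
    nlinarith [h3]
  have hunfold : cpCost (P1 - x1 + cpCost P1 P2 x1 x2) (P2 - x2 + cpCost P1 P2 x1 x2) (-x1) (-x2)
      = (-(P1 - x1 + cpCost P1 P2 x1 x2) - (P2 - x2 + cpCost P1 P2 x1 x2) + (-x1) + (-x2)
        + Real.sqrt (((P1 - x1 + cpCost P1 P2 x1 x2 - -x1)
            - (P2 - x2 + cpCost P1 P2 x1 x2 - -x2))^2
          + 4 * (P1 - x1 + cpCost P1 P2 x1 x2) * (P2 - x2 + cpCost P1 P2 x1 x2))) / 2 := rfl
  rw [hunfold, harg, Real.sqrt_sq (by positivity : (0:ℝ) ≤ P1 + P2)]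
  rw [cpCost, ← hs_def]
  ring
end

section
/- In the setting of a continuous, strictly increasing u: (0,∞)ⁿ → ℝ with liquidity Π ∈ (0,∞)ⁿ and cost C(x) = inf{c ∈ [minᵢ xᵢ, maxᵢ xᵢ] : u(Π − x + c𝟙) ≥ u(Π)}, the no-arbitrage bounds hold: minᵢ xᵢ ≤ C(x) ≤ maxᵢ xᵢ, and C(x) ∈ {minᵢ xᵢ, maxᵢ xᵢ} if and only if x = c·𝟙 for some c ∈ ℝ. -/
theorem stmt_9 (n : ℕ) [Nonempty (Fin n)] (u : (Fin n → ℝ) → ℝ)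
    (hu_cont : ContinuousOn u {z : Fin n → ℝ | ∀ i, 0 < z i})
    (hu_mono : ∀ z w : Fin n → ℝ, (∀ i, 0 < z i) → (∀ i, 0 < w i) →
      (∀ i, z i ≤ w i) → z ≠ w → u z < u w)
    (Pl : Fin n → ℝ) (hPl : ∀ i, 0 < Pl i)
    (C : (Fin n → ℝ) → ℝ)
    (hC : ∀ x : Fin n → ℝ, C x = sInf {c : ℝ |
      c ∈ Set.Icc (Finset.univ.inf' Finset.univ_nonempty x) (Finset.univ.sup' Finset.univ_nonempty x) ∧
      (∀ i, 0 < Pl i - x i + c) ∧ u (fun i => Pl i - x i + c) ≥ u Pl}) :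
    ∀ x : Fin n → ℝ,
      Finset.univ.inf' Finset.univ_nonempty x ≤ C x ∧
      C x ≤ Finset.univ.sup' Finset.univ_nonempty x ∧
      ((C x = Finset.univ.inf' Finset.univ_nonempty x ∨
        C x = Finset.univ.sup' Finset.univ_nonempty x) ↔ ∃ c : ℝ, x = fun _ => c) := by
  have hmono_le : ∀ z w : Fin n → ℝ, (∀ i, 0 < z i) → (∀ i, 0 < w i) →
      (∀ i, z i ≤ w i) → u z ≤ u w := by
    intro z w hz hw hzw
    rcases eq_or_ne z w with h | h
    · rw [h]
    · exact (hu_mono z w hz hw hzw h).le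
  intro x
  set m := Finset.univ.inf' Finset.univ_nonempty x with hm
  set M := Finset.univ.sup' Finset.univ_nonempty x with hM
  set S := {c : ℝ | c ∈ Set.Icc m M ∧
      (∀ i, 0 < Pl i - x i + c) ∧ u (fun i => Pl i - x i + c) ≥ u Pl} with hSdef
  have hCx : C x = sInf S := hC x
  have hxm : ∀ i, m ≤ x i := fun i => Finset.inf'_le _ (Finset.mem_univ i)
  have hxM : ∀ i, x i ≤ M := fun i => Finset.le_sup' _ (Finset.mem_univ i)
  obtain ⟨i₀⟩ := (inferInstance : Nonempty (Fin n))
  have hmM : m ≤ M := (hxm i₀).trans (hxM i₀)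
  have hMS : M ∈ S := by
    refine ⟨⟨hmM, le_refl _⟩, fun i => by linarith [hxM i, hPl i], ?_⟩
    exact hmono_le Pl _ hPl (fun i => by linarith [hxM i, hPl i])
      (fun i => by linarith [hxM i])
  have hbdd : BddBelow S := ⟨m, fun c hc => hc.1.1⟩
  have hne : S.Nonempty := ⟨M, hMS⟩
  have h1 : m ≤ sInf S := le_csInf hne (fun c hc => hc.1.1)
  have h2 : sInf S ≤ M := csInf_le hbdd hMS
  refine ⟨hCx ▸ h1, hCx ▸ h2, ?_, ?_⟩
  · -- forward direction
    intro hor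
    by_contra hnc
    push_neg at hnc
    have hmM' : m < M := by
      refine lt_of_le_of_ne hmM fun h => hnc m (funext fun i => ?_)
      have := hxM i
      rw [← h] at this
      exact le_antisymm this (hxm i)
    -- index attaining the inf and sup
    obtain ⟨i₁, -, hi₁⟩ := Finset.exists_mem_eq_inf' Finset.univ_nonempty x
    obtain ⟨j, -, hj⟩ := Finset.exists_mem_eq_sup' Finset.univ_nonempty x
    rcases hor with hcase | hcase
    · -- C x = m : contradiction
      have hsinf : sInf S = m := by rw [← hCx]; exact hcase
      set b := Finset.univ.inf' Finset.univ_nonempty Pl with hb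
      have hbpos : 0 < b := by
        rw [hb]; exact (Finset.lt_inf'_iff _).2 fun i _ => hPl i
      have hble : ∀ i, b ≤ Pl i := fun i => Finset.inf'_le _ (Finset.mem_univ i)
      set η := min ((M - m) / 2) (Pl j / 2) with hηdef
      have hη : 0 < η := lt_min (by linarith) (by linarith [hPl j])
      have hη1 : η ≤ (M - m) / 2 := min_le_left _ _
      have hη2 : η ≤ Pl j / 2 := min_le_right _ _
      set v : ℝ → Fin n → ℝ := fun c i => Pl i + (c - m) - (if i = j then η else 0) with hv
      have hvpos : ∀ c ∈ Set.Ioi (m - b / 2), ∀ i, 0 < v c i := by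
        intro c hc i
        simp only [hv]
        have hc' : m - b / 2 < c := hc
        rcases eq_or_ne i j with rfl | hij
        · have := hble i
          simp only [if_pos]
          linarith
        · have := hble i
          simp only [if_neg hij]
          linarith
      have hgcont : ContinuousOn (fun c => u (v c)) (Set.Ioi (m - b / 2)) := by
        apply hu_cont.comp
        · exact (continuous_pi fun i => by fun_prop).continuousOn
        · intro c hc
          exact hvpos c hc
      have hmem : Set.Ioi (m - b / 2) ∈ nhds m := Ioi_mem_nhds (by linarith)
      have hgm : u (v m) < u Pl := by
        apply hu_mono _ _ (hvpos m (by simp; linarith) ) hPl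
        · intro i
          simp only [hv]
          rcases eq_or_ne i j with rfl | hij
          · simp only [if_pos]; linarith
          · simp only [if_neg hij]; linarith
        · intro h
          have := congrFun h j
          simp only [hv, if_pos] at this
          linarith
      have hcontAt : ContinuousAt (fun c => u (v c)) m := hgcont.continuousAt hmem
      have hev : {c : ℝ | u (v c) < u Pl} ∈ nhds m := hcontAt (Iio_mem_nhds hgm)
      obtain ⟨ε, hε, hball⟩ := Metric.mem_nhds_iff.1 (Filter.inter_mem hev hmem)
      obtain ⟨c, hcS, hclt⟩ := exists_lt_of_csInf_lt hne (show sInf S < m + ε by rw [hsinf]; linarith)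
      have hcm : m ≤ c := hcS.1.1
      have hcball : c ∈ Metric.ball m ε := by
        rw [Metric.mem_ball, Real.dist_eq, abs_lt]
        constructor <;> linarith
      obtain ⟨hgc, hcD⟩ := hball hcball
      have hwv : u (fun i => Pl i - x i + c) ≤ u (v c) := by
        apply hmono_le _ _ hcS.2.1 (hvpos c hcD)
        intro i
        simp only [hv]
        rcases eq_or_ne i j with rfl | hij
        · simp only [if_pos]
          have : x i = M := hj.symm
          rw [this]; linarith
        · simp only [if_neg hij]
          have := hxm i
          linarith
      have := hcS.2.2
      exact absurd (le_trans this hwv) (not_le.2 hgc)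
    · -- C x = M : contradiction
      have hsinf : sInf S = M := by rw [← hCx]; exact hcase
      set a := Finset.univ.sup' Finset.univ_nonempty (fun i => x i - Pl i) with ha
      have haM : a < M := by
        rw [ha]
        exact (Finset.sup'_lt_iff _).2 fun i _ => by linarith [hxM i, hPl i]
      have hale : ∀ i, x i - Pl i ≤ a := fun i => Finset.le_sup' (fun i => x i - Pl i) (Finset.mem_univ i)
      have hpos : ∀ c ∈ Set.Ioi a, ∀ i, 0 < Pl i - x i + c := by
        intro c hc i
        have := hale i
        have hc' : a < c := hc
        linarith
      have hcont : ContinuousOn (fun c => u (fun i => Pl i - x i + c)) (Set.Ioi a) := by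
        apply hu_cont.comp
        · exact (continuous_pi fun i => by fun_prop).continuousOn
        · intro c hc
          exact hpos c hc
      have hmem : Set.Ioi a ∈ nhds M := Ioi_mem_nhds haM
      have huM : u Pl < u (fun i => Pl i - x i + M) := by
        apply hu_mono _ _ hPl (hpos M haM)
        · intro i; linarith [hxM i]
        · intro h
          have := congrFun h i₁
          rw [← hi₁] at this
          linarith
      have hcontAt : ContinuousAt (fun c => u (fun i => Pl i - x i + c)) M :=
        hcont.continuousAt hmem
      have hev : {c : ℝ | u Pl < u (fun i => Pl i - x i + c)} ∈ nhds M :=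
        hcontAt (Ioi_mem_nhds huM)
      obtain ⟨ε, hε, hball⟩ := Metric.mem_nhds_iff.1 (Filter.inter_mem hev hmem)
      set δ := min ε (M - m) with hδdef
      have hδ : 0 < δ := lt_min hε (by linarith)
      have hδ1 : δ ≤ ε := min_le_left _ _
      have hδ2 : δ ≤ M - m := min_le_right _ _
      set c := M - δ / 2 with hc
      have hcball : c ∈ Metric.ball M ε := by
        rw [Metric.mem_ball, Real.dist_eq, abs_lt]
        constructor <;> simp [hc] <;> linarith
      obtain ⟨huc, hcD⟩ := hball hcball
      have hcS : c ∈ S := by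
        refine ⟨⟨by simp [hc]; linarith, by simp [hc]; linarith⟩, hpos c hcD, le_of_lt huc⟩
      have := csInf_le hbdd hcS
      rw [hsinf] at this
      simp [hc] at this
      linarith
  · -- backward direction
    rintro ⟨c, rfl⟩
    left
    have hmc : m = c := by rw [hm]; exact Finset.inf'_const _ _
    have hMc : M = c := by rw [hM]; exact Finset.sup'_const _ _
    rw [hCx]
    rw [hmc]
    refine le_antisymm ?_ ?_
    · rw [← hMc]; exact h2
    · rw [← hmc]; exact h1
end

section
/- In the setting of a continuous, strictly increasing, quasiconcave u: (0,∞)ⁿ → ℝ with liquidity Π ∈ (0,∞)ⁿ, the associated cost function C: ℝⁿ → ℝ (defined by utility indifference) is convex: C(tx + (1−t)y) ≤ t·C(x) + (1−t)·C(y) for all x, y ∈ ℝⁿ and t ∈ [0,1]. -/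
theorem stmt_10 (n : ℕ) [Nonempty (Fin n)] (u : (Fin n → ℝ) → ℝ)
    (hu_cont : ContinuousOn u {z : Fin n → ℝ | ∀ i, 0 < z i})
    (hu_mono : ∀ z w : Fin n → ℝ, (∀ i, 0 < z i) → (∀ i, 0 < w i) →
      (∀ i, z i ≤ w i) → z ≠ w → u z < u w)
    (hu_qc : ∀ z w : Fin n → ℝ, (∀ i, 0 < z i) → (∀ i, 0 < w i) →
      ∀ t : ℝ, 0 ≤ t → t ≤ 1 → min (u z) (u w) ≤ u (fun i => t * z i + (1 - t) * w i))
    (Pl : Fin n → ℝ) (hPl : ∀ i, 0 < Pl i)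
    (C : (Fin n → ℝ) → ℝ)
    (hC : ∀ x : Fin n → ℝ, C x = sInf {c : ℝ |
      c ∈ Set.Icc (Finset.univ.inf' Finset.univ_nonempty x) (Finset.univ.sup' Finset.univ_nonempty x) ∧
      (∀ i, 0 < Pl i - x i + c) ∧ u (fun i => Pl i - x i + c) ≥ u Pl}) :
    ∀ (x y : Fin n → ℝ) (t : ℝ), 0 ≤ t → t ≤ 1 →
      C (fun i => t * x i + (1 - t) * y i) ≤ t * C x + (1 - t) * C y := by
  -- nonstrict monotonicity
  have mono : ∀ z w : Fin n → ℝ, (∀ i, 0 < z i) → (∀ i, 0 < w i) →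
      (∀ i, z i ≤ w i) → u z ≤ u w := by
    intro z w hz hw hle
    by_cases h : z = w
    · rw [h]
    · exact (hu_mono z w hz hw hle h).le
  -- the sup of v is always in the defining set of C v
  have hsup_mem : ∀ v : Fin n → ℝ,
      (Finset.univ.sup' Finset.univ_nonempty v) ∈ {c : ℝ |
        c ∈ Set.Icc (Finset.univ.inf' Finset.univ_nonempty v)
          (Finset.univ.sup' Finset.univ_nonempty v) ∧
        (∀ i, 0 < Pl i - v i + c) ∧ u (fun i => Pl i - v i + c) ≥ u Pl} := by
    intro v
    have hle : ∀ i, v i ≤ Finset.univ.sup' Finset.univ_nonempty v := by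
      intro i; exact Finset.le_sup' v (Finset.mem_univ i)
    have hpos : ∀ i, 0 < Pl i - v i + Finset.univ.sup' Finset.univ_nonempty v := by
      intro i; have := hle i; have := hPl i; linarith
    obtain ⟨i0⟩ := (inferInstance : Nonempty (Fin n))
    refine ⟨⟨le_trans (Finset.inf'_le v (Finset.mem_univ i0))
      (Finset.le_sup' v (Finset.mem_univ i0)), le_refl _⟩, hpos, ?_⟩
    exact mono Pl _ hPl hpos (fun i => by
      show Pl i ≤ Pl i - v i + Finset.univ.sup' Finset.univ_nonempty v
      have := hle i; linarith)
  -- any c satisfying positivity and the utility constraint is ≥ inf v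
  have hge : ∀ (v : Fin n → ℝ) (c : ℝ), (∀ i, 0 < Pl i - v i + c) →
      u (fun i => Pl i - v i + c) ≥ u Pl → Finset.univ.inf' Finset.univ_nonempty v ≤ c := by
    intro v c hpos hu
    by_contra h
    push_neg at h
    have hlt : ∀ i, c < v i := fun i =>
      lt_of_lt_of_le h (Finset.inf'_le v (Finset.mem_univ i))
    have hne : (fun i => Pl i - v i + c) ≠ Pl := by
      intro heq
      obtain ⟨i0⟩ := (inferInstance : Nonempty (Fin n))
      have := congrFun heq i0
      have := hlt i0
      linarith
    have := hu_mono (fun i => Pl i - v i + c) Pl hpos hPl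
      (fun i => by show Pl i - v i + c ≤ Pl i; have := hlt i; linarith) hne
    linarith
  intro x y t ht0 ht1
  set z : Fin n → ℝ := fun i => t * x i + (1 - t) * y i with hz
  apply le_of_forall_pos_le_add
  intro ε hε
  obtain ⟨cx, hcx, hcxlt⟩ := Real.lt_sInf_add_pos ⟨_, hsup_mem x⟩ hε
  obtain ⟨cy, hcy, hcylt⟩ := Real.lt_sInf_add_pos ⟨_, hsup_mem y⟩ hε
  rw [← hC x] at hcxlt
  rw [← hC y] at hcylt
  obtain ⟨-, hpx, hux⟩ := hcx
  obtain ⟨-, hpy, huy⟩ := hcy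
  set c : ℝ := t * cx + (1 - t) * cy with hc
  -- key algebraic identity
  have hkey : ∀ i, Pl i - z i + c
      = t * (Pl i - x i + cx) + (1 - t) * (Pl i - y i + cy) := by
    intro i; simp only [hz, hc]; ring
  -- positivity of the combined point
  have hposz : ∀ i, 0 < Pl i - z i + c := by
    intro i
    rw [hkey i]
    have hm : 0 < min (Pl i - x i + cx) (Pl i - y i + cy) := lt_min (hpx i) (hpy i)
    have h1 := mul_le_mul_of_nonneg_left (min_le_left (Pl i - x i + cx) (Pl i - y i + cy)) ht0
    have h2 := mul_le_mul_of_nonneg_left (min_le_right (Pl i - x i + cx) (Pl i - y i + cy))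
      (by linarith : (0:ℝ) ≤ 1 - t)
    nlinarith
  -- utility constraint for the combined point
  have huz : u (fun i => Pl i - z i + c) ≥ u Pl := by
    have hq := hu_qc (fun i => Pl i - x i + cx) (fun i => Pl i - y i + cy) hpx hpy t ht0 ht1
    have heq : (fun i => t * (Pl i - x i + cx) + (1 - t) * (Pl i - y i + cy))
        = fun i => Pl i - z i + c := by
      funext i; rw [hkey i]
    rw [heq] at hq
    exact le_trans (le_min hux huy) hq
  -- candidate: min of c and sup z
  set s : ℝ := Finset.univ.sup' Finset.univ_nonempty z with hs
  have hmem : min c s ∈ {d : ℝ |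
      d ∈ Set.Icc (Finset.univ.inf' Finset.univ_nonempty z) s ∧
      (∀ i, 0 < Pl i - z i + d) ∧ u (fun i => Pl i - z i + d) ≥ u Pl} := by
    have hinfc : Finset.univ.inf' Finset.univ_nonempty z ≤ c := hge z c hposz huz
    rcases le_total c s with h | h
    · rw [min_eq_left h]
      exact ⟨⟨hinfc, h⟩, hposz, huz⟩
    · rw [min_eq_right h]
      exact hsup_mem z
  have hbdd : BddBelow {d : ℝ |
      d ∈ Set.Icc (Finset.univ.inf' Finset.univ_nonempty z) s ∧
      (∀ i, 0 < Pl i - z i + d) ∧ u (fun i => Pl i - z i + d) ≥ u Pl} :=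
    ⟨Finset.univ.inf' Finset.univ_nonempty z, fun a ha => ha.1.1⟩
  have hCz : C z ≤ min c s := by
    rw [hC z]
    exact csInf_le hbdd hmem
  have hx' : 0 ≤ t * (C x + ε - cx) := mul_nonneg ht0 (by linarith)
  have hy' : 0 ≤ (1 - t) * (C y + ε - cy) := mul_nonneg (by linarith) (by linarith)
  have hcc : min c s ≤ c := min_le_left _ _
  nlinarith [hCz, hcc]
end

section
/- Fix Π ∈ (0,∞)ⁿ, a strictly increasing continuous utility u with cost C, and ℓ ∈ ℝⁿ with ℓ ≥ 0, ℓ ≠ 0. Then there exists a unique α* > 0 such that C( (α*/(1+α*))Π − (1/(1+α*))ℓ ; Π) = 0. -/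
set_option linter.unusedVariables false

section aux
variable {n : ℕ} [Nonempty (Fin n)]

private def Sset (u : (Fin n → ℝ) → ℝ) (Pl x : Fin n → ℝ) : Set ℝ :=
  {c : ℝ |
    c ∈ Set.Icc (Finset.univ.inf' Finset.univ_nonempty x) (Finset.univ.sup' Finset.univ_nonempty x) ∧
    (∀ i, 0 < Pl i - x i + c) ∧ u (fun i => Pl i - x i + c) ≥ u Pl}

private def Mono (u : (Fin n → ℝ) → ℝ) : Prop :=
  ∀ z w : Fin n → ℝ, (∀ i, 0 < z i) → (∀ i, 0 < w i) → (∀ i, z i ≤ w i) → z ≠ w → u z < u w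

private lemma mono_le' {u : (Fin n → ℝ) → ℝ} (hu_mono : Mono u)
    {z w : Fin n → ℝ} (hz : ∀ i, 0 < z i) (hw : ∀ i, 0 < w i)
    (hle : ∀ i, z i ≤ w i) : u z ≤ u w := by
  by_cases h : z = w
  · rw [h]
  · exact (hu_mono z w hz hw hle h).le

private lemma sup_mem_S {u : (Fin n → ℝ) → ℝ} (hu_mono : Mono u)
    {Pl x : Fin n → ℝ} (hPl : ∀ i, 0 < Pl i) :
    (Finset.univ.sup' Finset.univ_nonempty x) ∈ Sset u Pl x := by
  set M := Finset.univ.sup' Finset.univ_nonempty x with hM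
  have hxM : ∀ i, x i ≤ M := fun i => Finset.le_sup' x (Finset.mem_univ i)
  have hpos : ∀ i, 0 < Pl i - x i + M := fun i => by
    have h1 := hxM i; have h2 := hPl i; linarith
  refine ⟨⟨?_, le_refl _⟩, hpos, ?_⟩
  · exact le_trans (Finset.inf'_le x (Finset.mem_univ (Classical.arbitrary _)))
      (hxM (Classical.arbitrary _))
  · refine mono_le' hu_mono hPl hpos fun i => ?_
    have := hxM i; linarith

private lemma bdd_S {u : (Fin n → ℝ) → ℝ} {Pl x : Fin n → ℝ} : BddBelow (Sset u Pl x) :=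
  ⟨Finset.univ.inf' Finset.univ_nonempty x, fun c hc => hc.1.1⟩

private lemma neg_not_mem_S {u : (Fin n → ℝ) → ℝ} (hu_mono : Mono u)
    {Pl x : Fin n → ℝ} (hz : ∀ i, 0 < Pl i - x i)
    (hzu : u (fun i => Pl i - x i) ≤ u Pl) {c : ℝ} (hc : c < 0) :
    c ∉ Sset u Pl x := by
  rintro ⟨-, hpos, hge⟩
  have hlt : u (fun i => Pl i - x i + c) < u (fun i => Pl i - x i) := by
    refine hu_mono _ _ hpos hz (fun i => by linarith) ?_
    intro h
    have := congrFun h (Classical.arbitrary (Fin n))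
    linarith
  exact absurd hge (by push_neg; linarith)

private lemma cont_at_zero {u : (Fin n → ℝ) → ℝ}
    (hu_cont : ContinuousOn u {z : Fin n → ℝ | ∀ i, 0 < z i})
    {Pl x : Fin n → ℝ} (hz : ∀ i, 0 < Pl i - x i) :
    ContinuousAt (fun c : ℝ => u (fun i => Pl i - x i + c)) 0 := by
  have hO : IsOpen {w : Fin n → ℝ | ∀ i, 0 < w i} := by
    have h : {w : Fin n → ℝ | ∀ i, 0 < w i} = ⋂ i, (fun w : Fin n → ℝ => w i) ⁻¹' Set.Ioi 0 := by
      ext w; simp [Set.mem_iInter]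
    rw [h]
    exact isOpen_iInter_of_finite fun i => (continuous_apply i).isOpen_preimage _ isOpen_Ioi
  have hmap : Continuous (fun c : ℝ => fun i : Fin n => Pl i - x i + c) :=
    continuous_pi fun i => continuous_const.add continuous_id
  have hmem : (fun i => Pl i - x i + (0:ℝ)) ∈ {w : Fin n → ℝ | ∀ i, 0 < w i} := by
    simpa using hz
  exact (hu_cont.continuousAt (hO.mem_nhds hmem)).comp hmap.continuousAt

private lemma pos_eventually {Pl x : Fin n → ℝ} (hz : ∀ i, 0 < Pl i - x i) :
    ∀ᶠ c in nhds (0:ℝ), ∀ i, 0 < Pl i - x i + c := by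
  set m := Finset.univ.inf' Finset.univ_nonempty (fun i => Pl i - x i) with hm
  have hmpos : 0 < m := by
    obtain ⟨i, -, hi⟩ := Finset.exists_mem_eq_inf' (Finset.univ_nonempty) (fun i => Pl i - x i)
    rw [hm, hi]; exact hz i
  have : ∀ᶠ c in nhds (0:ℝ), c ∈ Set.Ioi (-m) :=
    eventually_mem_nhds_iff.mpr (isOpen_Ioi.mem_nhds (by simpa using hmpos)) |>.mono
      fun c hc => mem_of_mem_nhds hc
  refine this.mono fun c hc i => ?_
  have : m ≤ Pl i - x i := Finset.inf'_le _ (Finset.mem_univ i)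
  have : -m < c := hc
  linarith

private lemma case_eq {u : (Fin n → ℝ) → ℝ} (hu_mono : Mono u)
    {Pl x : Fin n → ℝ} (hPl : ∀ i, 0 < Pl i) (hz : ∀ i, 0 < Pl i - x i)
    (hzu : u (fun i => Pl i - x i) = u Pl) : sInf (Sset u Pl x) = 0 := by
  have hlb : ∀ c ∈ Sset u Pl x, (0:ℝ) ≤ c := by
    intro c hc
    by_contra hneg
    exact neg_not_mem_S hu_mono hz hzu.le (by linarith) hc
  have h0 : (0:ℝ) ∈ Sset u Pl x := by
    have hmin : Finset.univ.inf' Finset.univ_nonempty x ≤ 0 := by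
      by_contra h
      push_neg at h
      have hxpos : ∀ i, 0 < x i := fun i =>
        lt_of_lt_of_le h (Finset.inf'_le x (Finset.mem_univ i))
      have hne : (fun i => Pl i - x i) ≠ Pl := by
        intro hEq
        have h1 := congrFun hEq (Classical.arbitrary (Fin n))
        have := hxpos (Classical.arbitrary (Fin n)); linarith
      have := hu_mono _ Pl hz hPl (fun i => by have := hxpos i; linarith) hne
      linarith
    have hmax : 0 ≤ Finset.univ.sup' Finset.univ_nonempty x := by
      by_contra h
      push_neg at h
      have hxneg : ∀ i, x i < 0 := fun i =>
        lt_of_le_of_lt (Finset.le_sup' x (Finset.mem_univ i)) h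
      have hne : Pl ≠ (fun i => Pl i - x i) := by
        intro hEq
        have h1 := congrFun hEq (Classical.arbitrary (Fin n))
        have := hxneg (Classical.arbitrary (Fin n)); linarith
      have := hu_mono Pl _ hPl hz (fun i => by have := hxneg i; linarith) hne
      linarith
    exact ⟨⟨hmin, hmax⟩, fun i => by simpa using hz i, by simpa using hzu.ge⟩
  exact le_antisymm (csInf_le bdd_S h0) (le_csInf ⟨_, h0⟩ hlb)

private lemma case_gt {u : (Fin n → ℝ) → ℝ}
    (hu_cont : ContinuousOn u {z : Fin n → ℝ | ∀ i, 0 < z i}) (hu_mono : Mono u)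
    {Pl x : Fin n → ℝ} (hPl : ∀ i, 0 < Pl i) (hz : ∀ i, 0 < Pl i - x i)
    (hzu : u Pl < u (fun i => Pl i - x i)) : sInf (Sset u Pl x) < 0 := by
  set m := Finset.univ.inf' Finset.univ_nonempty x with hm
  set M := Finset.univ.sup' Finset.univ_nonempty x with hMdef
  rcases lt_or_ge M 0 with hM | hM
  · exact lt_of_le_of_lt (csInf_le bdd_S (sup_mem_S hu_mono hPl)) hM
  · have hmin : m < 0 := by
      rcases lt_or_ge m 0 with h | h
      · exact h
      · exfalso
        have hxpos : ∀ i, 0 ≤ x i := fun i =>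
          le_trans h (Finset.inf'_le x (Finset.mem_univ i))
        have := mono_le' hu_mono hz hPl (fun i => by have := hxpos i; linarith)
        linarith
    have hev : ∀ᶠ c in nhds (0:ℝ),
        u Pl < u (fun i => Pl i - x i + c) ∧ ∀ i, 0 < Pl i - x i + c := by
      have h1 : ∀ᶠ c in nhds (0:ℝ), u Pl < u (fun i => Pl i - x i + c) := by
        have hc := cont_at_zero hu_cont hz
        exact hc.eventually_const_lt (by simpa using hzu)
      exact h1.and (pos_eventually hz)
    obtain ⟨ε, hε, hball⟩ := Metric.eventually_nhds_iff.mp hev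
    set c := max m (-ε) / 2 with hc
    have hcm : m ≤ c ∧ c < 0 ∧ -ε < c := by
      have h1 : m ≤ max m (-ε) := le_max_left _ _
      have h2 : -ε ≤ max m (-ε) := le_max_right _ _
      have h3 : max m (-ε) < 0 := by
        rcases max_cases m (-ε) with ⟨h, -⟩ | ⟨h, -⟩ <;> rw [h] <;> linarith
      constructor
      · linarith
      constructor
      · linarith
      · linarith
    have hmem : c ∈ Sset u Pl x := by
      have hb := hball (y := c) (by
        rw [Real.dist_eq, sub_zero, abs_of_neg hcm.2.1]
        linarith [hcm.2.2])
      exact ⟨⟨hcm.1, by linarith [hcm.2.1, hM]⟩, hb.2, hb.1.le⟩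
    exact lt_of_le_of_lt (csInf_le bdd_S hmem) hcm.2.1

private lemma case_lt {u : (Fin n → ℝ) → ℝ}
    (hu_cont : ContinuousOn u {z : Fin n → ℝ | ∀ i, 0 < z i}) (hu_mono : Mono u)
    {Pl x : Fin n → ℝ} (hPl : ∀ i, 0 < Pl i) (hz : ∀ i, 0 < Pl i - x i)
    (hzu : u (fun i => Pl i - x i) < u Pl) : 0 < sInf (Sset u Pl x) := by
  have hev : ∀ᶠ c in nhds (0:ℝ), u (fun i => Pl i - x i + c) < u Pl :=
    (cont_at_zero hu_cont hz).eventually_lt_const (by simpa using hzu)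
  obtain ⟨ε, hε, hball⟩ := Metric.eventually_nhds_iff.mp hev
  have hlb : ∀ c ∈ Sset u Pl x, ε ≤ c := by
    intro c hc
    by_contra h
    push_neg at h
    rcases le_or_gt c (-ε) with hle | hlt
    · exact neg_not_mem_S hu_mono hz hzu.le (by linarith) hc
    · have hd : dist c 0 < ε := by
        rw [Real.dist_eq, sub_zero, abs_lt]; exact ⟨hlt, h⟩
      exact absurd hc.2.2 (by push_neg; exact hball hd)
  exact lt_of_lt_of_le hε (le_csInf ⟨_, sup_mem_S hu_mono hPl⟩ hlb)

end aux

set_option linter.unusedSectionVars false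

theorem stmt_15 (n : ℕ) [Nonempty (Fin n)] (u : (Fin n → ℝ) → ℝ)
    (hu_cont : ContinuousOn u {z : Fin n → ℝ | ∀ i, 0 < z i})
    (hu_mono : ∀ z w : Fin n → ℝ, (∀ i, 0 < z i) → (∀ i, 0 < w i) →
      (∀ i, z i ≤ w i) → z ≠ w → u z < u w)
    (Pl : Fin n → ℝ) (hPl : ∀ i, 0 < Pl i)
    (C : (Fin n → ℝ) → ℝ)
    (hC : ∀ x : Fin n → ℝ, C x = sInf {c : ℝ |
      c ∈ Set.Icc (Finset.univ.inf' Finset.univ_nonempty x) (Finset.univ.sup' Finset.univ_nonempty x) ∧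
      (∀ i, 0 < Pl i - x i + c) ∧ u (fun i => Pl i - x i + c) ≥ u Pl})
    (ℓ : Fin n → ℝ) (hℓ : ∀ i, 0 ≤ ℓ i) (hℓ0 : ℓ ≠ 0) :
    ∃! α : ℝ, 0 < α ∧
      C (fun i => (α / (1 + α)) * Pl i - (1 / (1 + α)) * ℓ i) = 0 := by
  classical
  have hMono : Mono u := hu_mono
  have hzpos : ∀ α : ℝ, 0 ≤ α → ∀ i, 0 < (Pl i + ℓ i) / (1 + α) := by
    intro α hα i
    apply div_pos (by linarith [hPl i, hℓ i]) (by linarith)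
  -- key equivalence
  have key : ∀ α : ℝ, 0 < α →
      (C (fun i => (α / (1 + α)) * Pl i - (1 / (1 + α)) * ℓ i) = 0 ↔
       u (fun i => (Pl i + ℓ i) / (1 + α)) = u Pl) := by
    intro α hα
    have h1α : (0:ℝ) < 1 + α := by linarith
    set x := fun i => (α / (1 + α)) * Pl i - (1 / (1 + α)) * ℓ i with hx
    have hzx : ∀ i, Pl i - x i = (Pl i + ℓ i) / (1 + α) := by
      intro i; rw [hx]; field_simp; ring
    have hz : ∀ i, 0 < Pl i - x i := fun i => by
      rw [hzx i]; exact hzpos α hα.le i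
    have hfun : (fun i => Pl i - x i) = fun i => (Pl i + ℓ i) / (1 + α) := funext hzx
    have hCx : C x = sInf (Sset u Pl x) := hC x
    constructor
    · intro h0
      rcases lt_trichotomy (u (fun i => Pl i - x i)) (u Pl) with hlt | heq | hgt
      · have := case_lt hu_cont hMono hPl hz hlt; rw [hCx] at h0; linarith
      · rw [← hfun]; exact heq
      · have := case_gt hu_cont hMono hPl hz hgt; rw [hCx] at h0; linarith
    · intro h; rw [hCx]; exact case_eq hMono hPl hz (by rw [hfun]; exact h)
  -- strict decrease of g
  set g : ℝ → ℝ := fun α => u (fun i => (Pl i + ℓ i) / (1 + α)) with hg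
  have gmono : ∀ s t : ℝ, 0 ≤ s → s < t → g t < g s := by
    intro s t hs hst
    have h1s : (0:ℝ) < 1 + s := by linarith
    have h1t : (0:ℝ) < 1 + t := by linarith
    apply hu_mono _ _ (hzpos t (by linarith)) (hzpos s hs)
    · intro i
      have hnum : (0:ℝ) < Pl i + ℓ i := by linarith [hPl i, hℓ i]
      exact div_le_div_of_nonneg_left hnum.le h1s (by linarith)
    · intro hEq
      have hj := congrFun hEq (Classical.arbitrary (Fin n))
      have hnum : (0:ℝ) < Pl (Classical.arbitrary (Fin n)) + ℓ (Classical.arbitrary (Fin n)) := by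
        linarith [hPl (Classical.arbitrary (Fin n)), hℓ (Classical.arbitrary (Fin n))]
      have := div_lt_div_of_pos_left hnum h1s (by linarith : 1 + s < 1 + t)
      linarith
  -- endpoint A
  set A : ℝ := (Finset.univ.sup' Finset.univ_nonempty (fun i => ℓ i / Pl i)) + 1 with hA
  have hsup0 : 0 ≤ Finset.univ.sup' Finset.univ_nonempty (fun i => ℓ i / Pl i) := by
    refine le_trans ?_ (Finset.le_sup' _ (Finset.mem_univ (Classical.arbitrary (Fin n))))
    exact div_nonneg (hℓ _) (hPl _).le
  have hApos : (0:ℝ) < A := by rw [hA]; linarith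
  have hgA : g A < u Pl := by
    apply hu_mono _ _ (hzpos A hApos.le) hPl
    · intro i
      have hsi : ℓ i / Pl i ≤ A - 1 := by
        rw [hA]; linarith [Finset.le_sup' (fun i => ℓ i / Pl i) (Finset.mem_univ i)]
      have hli : ℓ i ≤ (A - 1) * Pl i := by
        rw [div_le_iff₀ (hPl i)] at hsi; linarith
      rw [div_le_iff₀ (by linarith : (0:ℝ) < 1 + A)]
      nlinarith [hPl i]
    · intro hEq
      have hj := congrFun hEq (Classical.arbitrary (Fin n))
      set j := Classical.arbitrary (Fin n)
      have hsi : ℓ j / Pl j ≤ A - 1 := by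
        rw [hA]; linarith [Finset.le_sup' (fun i => ℓ i / Pl i) (Finset.mem_univ j)]
      have hli : ℓ j ≤ (A - 1) * Pl j := by
        rw [div_le_iff₀ (hPl j)] at hsi; linarith
      have : (Pl j + ℓ j) / (1 + A) < Pl j := by
        rw [div_lt_iff₀ (by linarith : (0:ℝ) < 1 + A)]
        nlinarith [hPl j]
      linarith
  have hg0 : u Pl < g 0 := by
    apply hu_mono _ _ hPl (hzpos 0 le_rfl)
    · intro i
      have : (1:ℝ) + 0 = 1 := by norm_num
      rw [this, div_one]
      linarith [hℓ i]
    · obtain ⟨j, hj⟩ := Function.ne_iff.mp hℓ0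
      have hjpos : 0 < ℓ j := lt_of_le_of_ne (hℓ j) (Ne.symm (by simpa using hj))
      intro hEq
      have h1 := congrFun hEq j
      rw [(by norm_num : (1:ℝ) + 0 = 1), div_one] at h1
      linarith
  -- continuity of g on [0, A]
  have hcont : ContinuousOn g (Set.Icc 0 A) := by
    apply hu_cont.comp
    · apply continuousOn_pi.mpr
      intro i
      apply ContinuousOn.div continuousOn_const
      · exact (continuous_const.add continuous_id).continuousOn
      · intro α hα
        have := hα.1
        simp only [Set.mem_Icc] at hα
        intro h
        linarith [hα.1]
    · intro α hα
      exact hzpos α hα.1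
  -- IVT
  obtain ⟨α, hαIcc, hαeq⟩ := intermediate_value_Icc' hApos.le hcont ⟨hgA.le, hg0.le⟩
  have hα0 : 0 < α := by
    rcases lt_or_eq_of_le hαIcc.1 with h | h
    · exact h
    · exfalso; rw [← h] at hαeq; rw [hαeq] at hg0; exact lt_irrefl _ hg0
  refine ⟨α, ⟨hα0, (key α hα0).mpr hαeq⟩, ?_⟩
  rintro β ⟨hβ0, hβC⟩
  have hβeq : g β = u Pl := (key β hβ0).mp hβC
  rcases lt_trichotomy β α with h | h | h
  · exfalso
    have := gmono β α hβ0.le h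
    rw [hαeq, hβeq] at this
    exact lt_irrefl _ this
  · exact h
  · exfalso
    have := gmono α β hα0.le h
    rw [hαeq, hβeq] at this
    exact lt_irrefl _ this
end

section
/- Let C: ℝⁿ → ℝ be translative (C(x + c𝟙) = C(x) + c). Fix α > −1 and x ∈ ℝⁿ. Then c̃ = (1+α)·C(x/(1+α)) is the unique solution of the rebalancing fixed point: c̃ = C(x + y − αΠ*) where y = αΠ* − (α/(1+α))x + (α/(1+α))c̃·𝟙, i.e., y satisfies y = α(Π* − x − (y − αΠ*) + c̃𝟙). -/
/-- Proposition 5.2 (rebalancing liquidity provider): with a rebalancing liquidity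
provider holding fraction `α` of the pool `Pl`, the effective cost of trading `x`
is `(1+α) C(x/(1+α))`, i.e. `c = (1+α) C(x/(1+α))` is the unique solution of the
fixed point `c = C(x + y - α Pl)` where `y = α (Pl - x - (y - α Pl) + c 𝟙)`. -/
theorem stmt_16 (n : ℕ) (C : (Fin n → ℝ) → ℝ)
    (htrans : ∀ (x : Fin n → ℝ) (c : ℝ), C (fun i => x i + c) = C x + c)
    (Pl : Fin n → ℝ) (α : ℝ) (hα : -1 < α) (x : Fin n → ℝ) :
    (∃ y : Fin n → ℝ,
      (∀ i, y i = α * (Pl i - x i - (y i - α * Pl i) + (1 + α) * C (fun j => x j / (1 + α)))) ∧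
      (1 + α) * C (fun j => x j / (1 + α)) = C (fun i => x i + y i - α * Pl i)) ∧
    ∀ (c : ℝ) (y : Fin n → ℝ),
      (∀ i, y i = α * (Pl i - x i - (y i - α * Pl i) + c)) →
      c = C (fun i => x i + y i - α * Pl i) →
      c = (1 + α) * C (fun j => x j / (1 + α)) := by
  have h1 : (1 : ℝ) + α ≠ 0 := by linarith
  set c₀ : ℝ := (1 + α) * C (fun j => x j / (1 + α)) with hc₀
  constructor
  · refine ⟨fun i => α * Pl i - (α / (1 + α)) * x i + (α / (1 + α)) * c₀, ?_, ?_⟩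
    · intro i
      field_simp
      ring
    · have harg : (fun i => x i + (α * Pl i - (α / (1 + α)) * x i + (α / (1 + α)) * c₀)
          - α * Pl i) = fun i => x i / (1 + α) + (α / (1 + α)) * c₀ := by
        funext i; field_simp; ring
      rw [harg, htrans (fun j => x j / (1 + α)) ((α / (1 + α)) * c₀)]
      rw [hc₀]; field_simp
  · intro c y hy hc
    have harg : (fun i => x i + y i - α * Pl i) = fun i => x i / (1 + α) + (α / (1 + α)) * c := by
      funext i
      have := hy i
      have : (1 + α) * y i = α * ((1 + α) * Pl i - x i + c) := by linarith [hy i]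
      field_simp
      nlinarith [this]
    rw [harg, htrans (fun j => x j / (1 + α)) ((α / (1 + α)) * c)] at hc
    field_simp at hc
    nlinarith [hc]
end

section
/- Let C: ℝⁿ → ℝ be translative and satisfy the path independence C(x+y;Π) = C(x;Π) + C(y;Π') with Π' = Π − x + C(x;Π)𝟙. Define C_γ(x;Π) = (1+γ)C(x;Π) − γ·minᵢ xᵢ. Then for x, y ∈ ℝⁿ with minᵢ(xᵢ+yᵢ) = minᵢ xᵢ + minᵢ yᵢ, one has C_γ(x+y;Π) = C_γ(x;Π) + C_γ(y;Π'). In particular, C_γ(x + c𝟙;Π) = C_γ(x;Π) + c for all c ∈ ℝ, and C_γ(x;Π) = C_γ(λx;Π) + C_γ((1−λ)x;Π'') for λ ∈ [0,1] with Π'' the post-trade pool after λx. -/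
private lemma inf'_add_const {n : ℕ} [Nonempty (Fin n)] (x : Fin n → ℝ) (c : ℝ) :
    Finset.univ.inf' Finset.univ_nonempty (fun i => x i + c) =
      Finset.univ.inf' Finset.univ_nonempty x + c := by
  apply le_antisymm
  · obtain ⟨i, _, hi⟩ := Finset.exists_mem_eq_inf' (Finset.univ_nonempty) x
    calc Finset.univ.inf' Finset.univ_nonempty (fun i => x i + c) ≤ x i + c :=
          Finset.inf'_le _ (Finset.mem_univ i)
      _ = _ := by rw [hi]
  · apply Finset.le_inf'
    intro i _
    have := Finset.inf'_le x (Finset.mem_univ i)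
    linarith

private lemma inf'_mul_const {n : ℕ} [Nonempty (Fin n)] (x : Fin n → ℝ) (c : ℝ) (hc : 0 ≤ c) :
    Finset.univ.inf' Finset.univ_nonempty (fun i => c * x i) =
      c * Finset.univ.inf' Finset.univ_nonempty x := by
  apply le_antisymm
  · obtain ⟨i, _, hi⟩ := Finset.exists_mem_eq_inf' (Finset.univ_nonempty) x
    calc Finset.univ.inf' Finset.univ_nonempty (fun i => c * x i) ≤ c * x i :=
          Finset.inf'_le _ (Finset.mem_univ i)
      _ = _ := by rw [hi]
  · apply Finset.le_inf'
    intro i _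
    exact mul_le_mul_of_nonneg_left (Finset.inf'_le x (Finset.mem_univ i)) hc

theorem stmt_19 (n : ℕ) [Nonempty (Fin n)]
    (C : (Fin n → ℝ) → (Fin n → ℝ) → ℝ)
    (htrans : ∀ (Pl x : Fin n → ℝ) (c : ℝ), C (fun i => x i + c) Pl = C x Pl + c)
    (hpath : ∀ Pl x y : Fin n → ℝ,
      C (fun i => x i + y i) Pl = C x Pl + C y (fun i => Pl i - x i + C x Pl))
    (γ : ℝ) (hγ : 0 ≤ γ)
    (Cγ : (Fin n → ℝ) → (Fin n → ℝ) → ℝ)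
    (hCγ : ∀ x Pl : Fin n → ℝ,
      Cγ x Pl = (1 + γ) * C x Pl - γ * Finset.univ.inf' Finset.univ_nonempty x)
    (Pl : Fin n → ℝ) :
    (∀ x y : Fin n → ℝ,
      Finset.univ.inf' Finset.univ_nonempty (fun i => x i + y i) =
        Finset.univ.inf' Finset.univ_nonempty x + Finset.univ.inf' Finset.univ_nonempty y →
      Cγ (fun i => x i + y i) Pl = Cγ x Pl + Cγ y (fun i => Pl i - x i + C x Pl)) ∧
    (∀ (x : Fin n → ℝ) (c : ℝ), Cγ (fun i => x i + c) Pl = Cγ x Pl + c) ∧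
    (∀ (x : Fin n → ℝ) (l : ℝ), 0 ≤ l → l ≤ 1 →
      Cγ x Pl = Cγ (fun i => l * x i) Pl +
        Cγ (fun i => (1 - l) * x i)
          (fun i => Pl i - l * x i + C (fun j => l * x j) Pl)) := by
  have part1 : ∀ x y : Fin n → ℝ,
      Finset.univ.inf' Finset.univ_nonempty (fun i => x i + y i) =
        Finset.univ.inf' Finset.univ_nonempty x + Finset.univ.inf' Finset.univ_nonempty y →
      Cγ (fun i => x i + y i) Pl = Cγ x Pl + Cγ y (fun i => Pl i - x i + C x Pl) := by
    intro x y hmin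
    rw [hCγ, hCγ, hCγ, hmin, hpath Pl x y]
    ring
  refine ⟨part1, ?_, ?_⟩
  · intro x c
    rw [hCγ, hCγ, htrans, inf'_add_const]
    ring
  · intro x l hl0 hl1
    have hx : (fun i => l * x i + (1 - l) * x i) = x := by funext i; ring
    have hmin : Finset.univ.inf' Finset.univ_nonempty (fun i => l * x i + (1 - l) * x i) =
        Finset.univ.inf' Finset.univ_nonempty (fun i => l * x i) +
          Finset.univ.inf' Finset.univ_nonempty (fun i => (1 - l) * x i) := by
      rw [inf'_mul_const x l hl0, inf'_mul_const x (1 - l) (by linarith)]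
      rw [show (fun i => l * x i + (1 - l) * x i) = x from hx]
      ring
    have := part1 (fun i => l * x i) (fun i => (1 - l) * x i) hmin
    rw [hx] at this
    exact this
end
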